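/- Let p ≥ 2 be an integer, U_k the Newton iterates for x^p = 1-z starting at 1, and let (1-z)^{1/p} denote the principal pth root. Then U_k(z) - (1-z)^{1/p} = [U_k(z)^p / Σ_{r=1}^{p} U_k(z)^{r-1} ((1-z)^{1/p})^{p-r}] · N_k(z) near z = 0, and hence U_k(z) - (1-z)^{1/p} = O(z^{2^k}) as z → 0. -/

import Mathlib

open Asymptotics Filter Finset Complex in
theorem stmt_15 (p : ℕ) (hp : 2 ≤ p) (U : ℕ → ℂ → ℂ) (N : ℕ → ℂ → ℂ)
    (hU0 : ∀ z, U 0 z = 1)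
    (hU : ∀ k z, U (k + 1) z =
      ((p - 1) * U k z + (1 - z) / (U k z) ^ (p - 1)) / p)
    (hN : ∀ k z, N k z = 1 - (1 - z) / (U k z) ^ p) (k : ℕ) :
    (∀ᶠ z : ℂ in nhds 0,
      U k z - (1 - z) ^ ((p : ℂ)⁻¹) =
        (U k z) ^ p /
          (∑ r ∈ Finset.range p, (U k z) ^ r * ((1 - z) ^ ((p : ℂ)⁻¹)) ^ (p - 1 - r)) *
          N k z) ∧
    (fun z : ℂ => U k z - (1 - z) ^ ((p : ℂ)⁻¹)) =O[nhds 0]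
      fun z : ℂ => z ^ (2 ^ k) := by
  obtain ⟨m, rfl⟩ : ∃ m, p = m + 2 := ⟨p - 2, by omega⟩
  have hp0 : ((m : ℂ) + 2) ≠ 0 := by
    exact_mod_cast (Nat.cast_ne_zero (R := ℂ)).2 (show m + 2 ≠ 0 by omega)
  have hpc : ((m + 2 : ℕ) : ℂ) = (m : ℂ) + 2 := by push_cast; ring
  set w : ℂ → ℂ := fun z => (1 - z) ^ (((m + 2 : ℕ) : ℂ))⁻¹ with hwdef
  have hwpow : ∀ z : ℂ, (w z) ^ (m + 2) = 1 - z := fun z =>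
    Complex.cpow_nat_inv_pow _ (by omega)
  have hw0 : w 0 = 1 := by simp [hwdef]
  have hwc : ContinuousAt w 0 := by
    apply ContinuousAt.cpow (by fun_prop) continuousAt_const
    simp [Complex.slitPlane]
  -- continuity and value of U k
  have hUc : ∀ k, ContinuousAt (U k) 0 ∧ U k 0 = 1 := by
    intro k
    induction k with
    | zero =>
      have h : U 0 = fun _ => 1 := funext hU0
      exact ⟨by rw [h]; exact continuousAt_const, hU0 0⟩
    | succ k ih =>
      have h : U (k + 1) = fun z =>
          ((((m + 2 : ℕ) : ℂ) - 1) * U k z + (1 - z) / (U k z) ^ (m + 2 - 1)) /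
            ((m + 2 : ℕ) : ℂ) := funext (hU k)
      constructor
      · rw [h]
        apply ContinuousAt.div _ continuousAt_const (by rw [hpc]; exact hp0)
        apply ContinuousAt.add (continuousAt_const.mul ih.1)
        exact (continuousAt_const.sub continuousAt_id).div (ih.1.pow _)
          (by rw [ih.2]; simp)
      · rw [hU k 0, ih.2, hpc]
        simp
        ring_nf; ring_nf at hp0; exact hp0
  have hUne : ∀ k, ∀ᶠ z in nhds (0:ℂ), U k z ≠ 0 := fun k =>
    (hUc k).1.eventually_ne (by rw [(hUc k).2]; exact one_ne_zero)
  -- continuity and value of N k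
  have hNc : ∀ k, ContinuousAt (N k) 0 ∧ N k 0 = 0 := by
    intro k
    have h : N k = fun z => 1 - (1 - z) / (U k z) ^ (m + 2) := funext (hN k)
    constructor
    · rw [h]
      exact continuousAt_const.sub
        (((continuousAt_const.sub continuousAt_id).div ((hUc k).1.pow _))
          (by simp [(hUc k).2]))
    · rw [hN k 0, (hUc k).2]; simp
  have hNto : ∀ k, Tendsto (N k) (nhds 0) (nhds 0) := by
    intro k
    have h := (hNc k).1
    rwa [ContinuousAt, (hNc k).2] at h
  -- the polynomial Q with (1 - t/p)^p - (1 - t) = t^2 * Q t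
  set Q : ℂ → ℂ := fun t =>
    ∑ j ∈ range (m + 1), ((m + 2).choose (j + 2) : ℂ) * (-1 / ((m:ℂ) + 2)) ^ (j + 2) * t ^ j
    with hQdef
  have hkey : ∀ t : ℂ, (1 - t / ((m:ℂ) + 2)) ^ (m + 2) - (1 - t) = t ^ 2 * Q t := by
    intro t
    have h1 : (1 - t / ((m:ℂ) + 2)) ^ (m + 2) =
        ∑ j ∈ range (m + 2 + 1),
          (-(t / ((m:ℂ) + 2))) ^ j * 1 ^ (m + 2 - j) * ((m + 2).choose j : ℂ) := by
      rw [show (1 - t / ((m:ℂ) + 2)) = (-(t / ((m:ℂ) + 2)) + 1) by ring, add_pow]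
    rw [h1, Finset.sum_range_succ', Finset.sum_range_succ']
    have h2 : ∀ j ∈ range (m + 1),
        (-(t / ((m:ℂ) + 2))) ^ (j + 1 + 1) * 1 ^ (m + 2 - (j + 1 + 1)) *
            ((m + 2).choose (j + 1 + 1) : ℂ) =
          t ^ 2 * (((m + 2).choose (j + 2) : ℂ) * (-1 / ((m:ℂ) + 2)) ^ (j + 2) * t ^ j) := by
      intro j _
      rw [one_pow, show (-(t / ((m:ℂ) + 2))) = (-1 / ((m:ℂ) + 2)) * t by ring, mul_pow]
      ring
    rw [Finset.sum_congr rfl h2, ← Finset.mul_sum, hQdef]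
    have hc1 : ((m + 2).choose 1 : ℂ) = (m : ℂ) + 2 := by
      rw [Nat.choose_one_right]; push_cast; ring
    have hc0 : ((m + 2).choose 0 : ℂ) = 1 := by norm_num
    rw [hc1, hc0]
    beta_reduce
    set s := ∑ j ∈ range (m + 1), ((m + 2).choose (j + 2) : ℂ) * (-1 / ((m:ℂ) + 2)) ^ (j + 2) * t ^ j with hs
    field_simp
    linear_combination (-t) * mul_inv_cancel₀ hp0
  have hQc : ContinuousAt Q 0 := by
    rw [hQdef]
    exact (continuous_finset_sum _ fun j _ =>
      (continuous_const.mul (continuous_pow j))).continuousAt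
  -- the step identity
  have hstep : ∀ k, ∀ᶠ z in nhds (0:ℂ), N (k + 1) z =
      (N k z) ^ 2 * (Q (N k z) / (1 - N k z / ((m:ℂ) + 2)) ^ (m + 2)) := by
    intro k
    have hdto : Tendsto (fun z => 1 - N k z / ((m:ℂ) + 2)) (nhds 0) (nhds 1) := by
      have := (tendsto_const_nhds :
          Tendsto (fun _ : ℂ => (1:ℂ)) (nhds 0) (nhds 1)).sub
        ((hNto k).div_const ((m:ℂ) + 2))
      simpa using this
    filter_upwards [hUne k, hdto.eventually_ne one_ne_zero] with z hu hd
    have hupow : (U k z) ^ (m + 2) ≠ 0 := pow_ne_zero _ hu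
    have h1z : (1 - z) = (U k z) ^ (m + 2) * (1 - N k z) := by
      have h := hN k z
      field_simp at h
      linear_combination h
    have hUk1 : U (k + 1) z = U k z * (1 - N k z / ((m:ℂ) + 2)) := by
      rw [hU k z, h1z, hpc, show m + 2 - 1 = m + 1 by omega]
      field_simp
      ring
    rw [hN (k + 1) z, hUk1, h1z, mul_pow]
    rw [show (U k z) ^ (m + 2) * (1 - N k z) /
        ((U k z) ^ (m + 2) * (1 - N k z / ((m:ℂ) + 2)) ^ (m + 2)) =
        (1 - N k z) / (1 - N k z / ((m:ℂ) + 2)) ^ (m + 2) by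
      rw [mul_div_mul_left _ _ hupow]]
    have hdpow : (1 - N k z / ((m:ℂ) + 2)) ^ (m + 2) ≠ 0 := pow_ne_zero _ hd
    have hgoal : (1 : ℂ) - (1 - N k z) / (1 - N k z / ((m:ℂ) + 2)) ^ (m + 2) =
        ((1 - N k z / ((m:ℂ) + 2)) ^ (m + 2) - (1 - N k z)) /
          (1 - N k z / ((m:ℂ) + 2)) ^ (m + 2) := by
      rw [eq_div_iff hdpow, sub_mul, one_mul, div_mul_cancel₀ _ hdpow]
    rw [hgoal, hkey (N k z), mul_div_assoc]
  -- N k = O(z ^ 2^k)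
  have hNO : ∀ k, (N k) =O[nhds (0:ℂ)] fun z => z ^ (2 ^ k) := by
    intro k
    induction k with
    | zero =>
      have h : N 0 = fun z : ℂ => z := by
        funext z; rw [hN 0 z, hU0 z]; simp
      rw [h]
      simpa using isBigO_refl (fun z : ℂ => z) (nhds 0)
    | succ k ih =>
      have h2 : (fun z => (N k z) ^ 2) =O[nhds (0:ℂ)] fun z => (z ^ (2 ^ k)) ^ 2 := ih.pow 2
      have hb : (fun z => Q (N k z) / (1 - N k z / ((m:ℂ) + 2)) ^ (m + 2))
          =O[nhds (0:ℂ)] (fun _ => (1:ℂ)) := by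
        apply Filter.Tendsto.isBigO_one
        have hnum : Tendsto (fun z => Q (N k z)) (nhds 0) (nhds (Q 0)) :=
          hQc.tendsto.comp (hNto k)
        have hden : Tendsto (fun z => (1 - N k z / ((m:ℂ) + 2)) ^ (m + 2))
            (nhds 0) (nhds 1) := by
          have := ((tendsto_const_nhds :
              Tendsto (fun _ : ℂ => (1:ℂ)) (nhds 0) (nhds 1)).sub
            ((hNto k).div_const ((m:ℂ) + 2))).pow (m + 2)
          simpa using this
        exact hnum.div hden one_ne_zero
      have hgq : (fun z : ℂ => (z ^ (2 ^ k)) ^ 2 * 1) =ᶠ[nhds (0:ℂ)]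
          fun z : ℂ => z ^ (2 ^ (k + 1)) :=
        Eventually.of_forall fun z => by simp only [mul_one]; rw [← pow_mul, pow_succ]
      exact (h2.mul hb).congr' ((hstep k).mono fun z h => h.symm) hgq
  -- the sum S
  set S : ℂ → ℂ := fun z =>
    ∑ r ∈ range (m + 2), (U k z) ^ r * (w z) ^ (m + 2 - 1 - r) with hSdef
  have hSto : Tendsto S (nhds 0) (nhds ((m:ℂ) + 2)) := by
    have h0 : ∑ r ∈ range (m + 2), ((1:ℂ) ^ r * (1:ℂ) ^ (m + 2 - 1 - r)) = (m:ℂ) + 2 := by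
      simp
    rw [hSdef, ← h0]
    apply tendsto_finset_sum
    intro r _
    have hu : Tendsto (U k) (nhds 0) (nhds 1) := (hUc k).2 ▸ (hUc k).1
    have hwto : Tendsto w (nhds 0) (nhds 1) := hw0 ▸ hwc
    exact (hu.pow r).mul (hwto.pow _)
  have hSne : ∀ᶠ z in nhds (0:ℂ), S z ≠ 0 := hSto.eventually_ne hp0
  -- the identity
  have hident : ∀ᶠ z in nhds (0:ℂ), U k z - w z = (U k z) ^ (m + 2) / S z * N k z := by
    filter_upwards [hUne k, hSne] with z hu hs
    have hupow : (U k z) ^ (m + 2) ≠ 0 := pow_ne_zero _ hu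
    have hgeom : S z * (U k z - w z) = (U k z) ^ (m + 2) - (w z) ^ (m + 2) :=
      geom_sum₂_mul (U k z) (w z) (m + 2)
    have hUN : (U k z) ^ (m + 2) * N k z = S z * (U k z - w z) := by
      rw [hgeom, hwpow, hN k z]
      field_simp
    rw [div_mul_eq_mul_div, hUN, mul_comm (S z) (U k z - w z), mul_div_assoc,
      div_self hs, mul_one]
  refine ⟨hident, ?_⟩
  have hfrac : (fun z => (U k z) ^ (m + 2) / S z) =O[nhds (0:ℂ)] (fun _ => (1:ℂ)) := by
    apply Filter.Tendsto.isBigO_one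
    have hu : Tendsto (U k) (nhds 0) (nhds 1) := (hUc k).2 ▸ (hUc k).1
    exact (hu.pow (m + 2)).div hSto hp0
  exact ((hfrac.mul (hNO k)).congr' (hident.mono fun z h => h.symm)
    (Eventually.of_forall fun z => one_mul _))
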